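/- Let k be a field and V, W finite-dimensional nonzero k-vector spaces. If φ: End(V) → End(W) is a k-algebra isomorphism, then there exists a k-linear isomorphism u: V → W with φ(a) = u ∘ a ∘ u⁻¹ for all a ∈ End(V), and u is unique up to multiplication by a nonzero scalar: if u' also induces φ then u' = c·u for some c ∈ kˣ. -/

import Mathlib

lemma exists_dual_one {k V : Type} [Field k] [AddCommGroup V] [Module k V]
    {v : V} (hv : v ≠ 0) : ∃ f : V →ₗ[k] k, f v = 1 := by
  obtain ⟨g, hg⟩ := (LinearMap.toSpanSingleton k V v).exists_leftInverse_of_injective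
    (LinearMap.ker_toSpanSingleton (R := k) hv)
  exact ⟨g, by simpa using LinearMap.congr_fun hg 1⟩


/-- Skolem–Noether for matrix algebras over a field: every
`k`-algebra isomorphism `End(V) ≅ End(W)` is conjugation by a linear
isomorphism `u : V ≃ W`, and `u` is unique up to a nonzero scalar. -/
theorem stmt_3
    (k : Type) [Field k] (V W : Type)
    [AddCommGroup V] [Module k V] [AddCommGroup W] [Module k W]
    [FiniteDimensional k V] [FiniteDimensional k W]
    (hV : Nontrivial V) (hW : Nontrivial W)
    (φ : Module.End k V ≃ₐ[k] Module.End k W) :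
    ∃ u : V ≃ₗ[k] W,
      (∀ a : Module.End k V,
        φ a = (u : V →ₗ[k] W) ∘ₗ a ∘ₗ (u.symm : W →ₗ[k] V)) ∧
      ∀ u' : V ≃ₗ[k] W,
        (∀ a : Module.End k V,
          φ a = (u' : V →ₗ[k] W) ∘ₗ a ∘ₗ (u'.symm : W →ₗ[k] V)) →
        ∃ c : kˣ, (u' : V →ₗ[k] W) = (c : k) • (u : V →ₗ[k] W) := by
  obtain ⟨v₀, hv₀⟩ := exists_ne (0 : V)
  obtain ⟨f, hf⟩ := exists_dual_one (k := k) hv₀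
  -- rank-one endomorphisms g v : x ↦ f x • v
  let g : V → Module.End k V := fun v => LinearMap.toSpanSingleton k V v ∘ₗ f
  have hg_apply : ∀ v x, g v x = f x • v := fun v x => rfl
  have hg_mul : ∀ (a : Module.End k V) v, a * g v = g (a v) := by
    intro a v
    ext x
    simp [Module.End.mul_apply, hg_apply, map_smul]
  have hgv₀ : ∀ v, g v v₀ = v := by
    intro v; simp [hg_apply, hf]
  -- the idempotent φ (g v₀) and a fixed vector w₀ of it
  have he : g v₀ * g v₀ = g v₀ := by rw [hg_mul, hgv₀]
  have he' : φ (g v₀) * φ (g v₀) = φ (g v₀) := by rw [← map_mul, he]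
  have he'ne : φ (g v₀) ≠ 0 := by
    intro h
    have hz : g v₀ = 0 := by apply φ.injective; simpa using h
    exact hv₀ (by rw [← hgv₀ v₀, hz]; rfl)
  obtain ⟨w₀, hw₀, he'w₀⟩ : ∃ w₀ : W, w₀ ≠ 0 ∧ φ (g v₀) w₀ = w₀ := by
    obtain ⟨w, hw⟩ : ∃ w, φ (g v₀) w ≠ 0 := by
      by_contra h
      push_neg at h
      exact he'ne (LinearMap.ext fun x => h x)
    exact ⟨φ (g v₀) w, hw, by rw [← Module.End.mul_apply, he']⟩
  -- the linear map u₀ : v ↦ φ (g v) w₀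
  let u₀ : V →ₗ[k] W :=
    { toFun := fun v => φ (g v) w₀
      map_add' := by
        intro v v'
        have hgadd : g (v + v') = g v + g v' := by
          ext x; simp [hg_apply, smul_add]
        simp only [hgadd, map_add, LinearMap.add_apply]
      map_smul' := by
        intro c v
        have hgsmul : g (c • v) = c • g v := by
          ext x
          rw [hg_apply, LinearMap.smul_apply, hg_apply, smul_comm]
        simp only [hgsmul, map_smul, LinearMap.smul_apply, RingHom.id_apply] }
  have hu₀ : ∀ v, u₀ v = φ (g v) w₀ := fun _ => rfl
  have hcomm : ∀ (a : Module.End k V) v, φ a (u₀ v) = u₀ (a v) := by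
    intro a v
    rw [hu₀, hu₀, ← hg_mul, map_mul, Module.End.mul_apply]
  have hu₀v₀ : u₀ v₀ = w₀ := he'w₀
  have hinj : Function.Injective u₀ := by
    rw [← LinearMap.ker_eq_bot, LinearMap.ker_eq_bot']
    intro v hv
    by_contra hvne
    obtain ⟨h, hh⟩ := exists_dual_one (k := k) hvne
    have hav : (LinearMap.toSpanSingleton k V v₀ ∘ₗ h : Module.End k V) v = v₀ := by
      simp [hh]
    exact hw₀ (by rw [← hu₀v₀, ← hav, ← hcomm, hv, map_zero])
  have hsurj : Function.Surjective u₀ := by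
    intro w'
    obtain ⟨fW, hfW⟩ := exists_dual_one (k := k) hw₀
    refine ⟨φ.symm (LinearMap.toSpanSingleton k W w' ∘ₗ fW) v₀, ?_⟩
    rw [← hcomm, hu₀v₀, φ.apply_symm_apply]
    simp [hfW]
  set u : V ≃ₗ[k] W := LinearEquiv.ofBijective u₀ ⟨hinj, hsurj⟩ with hudef
  have hucoe : ∀ v, (u : V →ₗ[k] W) v = u₀ v := fun _ => rfl
  have hucoe' : ∀ w', (u.symm : W →ₗ[k] V) w' = u.symm w' := fun _ => rfl
  have husymm' : ∀ w', u₀ (u.symm w') = w' := fun w' => u.apply_symm_apply w'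
  refine ⟨u, ?_, ?_⟩
  · intro a
    ext w'
    simp only [LinearMap.comp_apply, hucoe, hucoe']
    rw [← hcomm, husymm']
  · intro u' hu'
    have hcomm' : ∀ (a : Module.End k V) v, φ a (u' v) = u' (a v) := by
      intro a v
      rw [hu' a]
      simp
    have husymm : ∀ (a : Module.End k V) w', u.symm (φ a w') = a (u.symm w') := by
      intro a w'
      apply hinj
      rw [husymm', ← hcomm, husymm']
    have ht : ∀ v, u.symm (u' v) = f (u.symm (u' v₀)) • v := by
      intro v
      calc u.symm (u' v) = u.symm (u' (g v v₀)) := by rw [hgv₀]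
        _ = u.symm (φ (g v) (u' v₀)) := by rw [hcomm']
        _ = g v (u.symm (u' v₀)) := husymm _ _
        _ = f (u.symm (u' v₀)) • v := by rw [hg_apply]
    have hc : f (u.symm (u' v₀)) ≠ 0 := by
      intro h
      have h1 := ht v₀
      rw [h, zero_smul] at h1
      have h2 : u' v₀ = 0 := by
        have h3 := congrArg u₀ h1
        rwa [husymm', map_zero] at h3
      exact hv₀ (u'.injective (by simpa using h2))
    refine ⟨Units.mk0 _ hc, ?_⟩
    ext v
    have h4 := congrArg u₀ (ht v)
    rw [husymm', map_smul] at h4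
    simpa [hucoe] using h4
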